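/- The k-th Fourier coefficient of the periodic function Q_c(x) = Σ_{n∈ℤ} A(c(n-x)), where A(x) = exp(-2x - (1/2)exp(-2x)) and c > 0, is a_k = ∫₀¹ Q_c(x) e^{-2πikx} dx = (2^{-πik/c}/c) · Γ(1 - πik/c). -/

import Mathlib

open Complex

/-- The density of `(Z - log 2)/2` for `Z` standard Gumbel, as a function on `ℂ`. -/
noncomputable def gumbelA (x : ℂ) : ℂ :=
  Complex.exp (-2 * x - (1 / 2) * Complex.exp (-2 * x))

/-- The cycling profile `Q_c(x) = Σ_{n∈ℤ} A(c(n - x))` for real `x`. -/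
noncomputable def cyclingProfile (c : ℝ) (x : ℝ) : ℂ :=
  ∑' n : ℤ, gumbelA (c * (n - x))

lemma continuous_gumbelA : Continuous gumbelA := by
  unfold gumbelA; fun_prop

lemma norm_gumbelA (t : ℝ) :
    ‖gumbelA t‖ = Real.exp (-2 * t - (1 / 2) * Real.exp (-2 * t)) := by
  unfold gumbelA
  rw [show (-2 * (t : ℂ) - (1 / 2) * Complex.exp (-2 * t))
      = ((-2 * t - (1 / 2) * Real.exp (-2 * t) : ℝ) : ℂ) by push_cast; ring]
  rw [Complex.norm_exp, Complex.ofReal_re]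

lemma gumbel_key (u : ℝ) (hu : 0 < u) : u * Real.exp (-(u / 2)) ≤ 3 * u⁻¹ := by
  have hA : 0 < Real.exp (u / 4) := Real.exp_pos _
  have hB : (2.7182818283 : ℝ) < Real.exp 1 := Real.exp_one_gt_d9
  have hE : 0 < Real.exp (-(u / 2)) := Real.exp_pos _
  have hEA : Real.exp (-(u / 2)) * Real.exp (u / 4) * Real.exp (u / 4) = 1 := by
    rw [← Real.exp_add, ← Real.exp_add, show -(u / 2) + u / 4 + u / 4 = 0 by ring, Real.exp_zero]
  have h1 : u * Real.exp 1 ≤ 4 * Real.exp (u / 4) := by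
    have h2 := Real.add_one_le_exp (u / 4 - 1)
    have h3 : Real.exp (u / 4 - 1) * Real.exp 1 = Real.exp (u / 4) := by
      rw [← Real.exp_add]; ring_nf
    nlinarith [Real.exp_pos (u / 4 - 1), Real.exp_pos (1 : ℝ)]
  have h2 : u * Real.exp 1 * (u * Real.exp 1) ≤ 4 * Real.exp (u / 4) * (4 * Real.exp (u / 4)) :=
    mul_le_mul h1 h1 (by positivity) (by positivity)
  have h3 : u * Real.exp 1 * (u * Real.exp 1) * Real.exp (-(u / 2))
      ≤ 4 * Real.exp (u / 4) * (4 * Real.exp (u / 4)) * Real.exp (-(u / 2)) :=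
    mul_le_mul_of_nonneg_right h2 hE.le
  have h4 : 4 * Real.exp (u / 4) * (4 * Real.exp (u / 4)) * Real.exp (-(u / 2)) = 16 := by
    nlinarith [hEA]
  have hgoal : u * u * Real.exp (-(u / 2)) ≤ 3 := by
    have hee : (2.7182818283 : ℝ) * 2.7182818283 < Real.exp 1 * Real.exp 1 :=
      mul_lt_mul'' hB hB (by norm_num) (by norm_num)
    nlinarith [h3, h4, hee, hu, hE, mul_pos hu hu, mul_pos (mul_pos hu hu) hE]
  calc u * Real.exp (-(u / 2)) = (u * u * Real.exp (-(u / 2))) * u⁻¹ := by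
        field_simp
    _ ≤ 3 * u⁻¹ := by
        apply mul_le_mul_of_nonneg_right hgoal (by positivity)

lemma norm_gumbelA_le (t : ℝ) :
    ‖gumbelA t‖ ≤ 3 * Real.exp (-(2 * |t|)) := by
  rw [norm_gumbelA]
  rcases le_or_gt 0 t with ht | ht
  · rw [_root_.abs_of_nonneg ht]
    have h1 : Real.exp (-2 * t - 1 / 2 * Real.exp (-2 * t)) ≤ Real.exp (-(2 * t)) := by
      apply Real.exp_le_exp.mpr
      have := Real.exp_pos (-2 * t)
      linarith
    have := Real.exp_pos (-(2 * t))
    linarith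
  · rw [_root_.abs_of_neg ht]
    have hu0 : 0 < Real.exp (-2 * t) := Real.exp_pos _
    have hexp : Real.exp (-2 * t - 1 / 2 * Real.exp (-2 * t))
        = Real.exp (-2 * t) * Real.exp (-(Real.exp (-2 * t) / 2)) := by
      rw [← Real.exp_add]; ring_nf
    have hneg : Real.exp (-(2 * -t)) = (Real.exp (-2 * t))⁻¹ := by
      rw [← Real.exp_neg]; ring_nf
    rw [hexp, hneg]
    calc Real.exp (-2 * t) * Real.exp (-(Real.exp (-2 * t) / 2))
        ≤ 3 * (Real.exp (-2 * t))⁻¹ := gumbel_key _ hu0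
      _ = 3 * (Real.exp (-2 * t))⁻¹ := rfl

lemma summable_exp_int (a : ℝ) (ha : 0 < a) :
    Summable (fun n : ℤ => Real.exp (-a * |(n : ℝ)|)) := by
  have h : Summable (fun n : ℕ => Real.exp ((n : ℝ) * -a)) :=
    Real.summable_exp_nat_mul_iff.mpr (by linarith)
  apply Summable.of_nat_of_neg
  · exact h.congr fun n => by
      rw [show -a * |((n : ℤ) : ℝ)| = (n : ℝ) * -a by
        rw [Int.cast_natCast, _root_.abs_of_nonneg (Nat.cast_nonneg n)]; ring]
  · exact h.congr fun n => by
      congr 1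
      push_cast
      rw [abs_neg, _root_.abs_of_nonneg (Nat.cast_nonneg n)]; ring

set_option maxHeartbeats 2000000 in
/-- The `k`-th Fourier coefficient of the periodic function `Q_c` is
`a_k = ∫₀¹ Q_c(x) e^{-2πikx} dx = (2^{-πik/c}/c) Γ(1 - πik/c)`. -/
theorem cyclingProfile_fourier_coeff (c : ℝ) (hc : 0 < c) (k : ℤ) :
    ∫ x in (0:ℝ)..1, cyclingProfile c x * Complex.exp (-2 * Real.pi * Complex.I * k * x)
      = (2 : ℂ) ^ (-(Real.pi * Complex.I * k) / c) / c
          * Complex.Gamma (1 - Real.pi * Complex.I * k / c) := by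
  have hc0 : (c : ℂ) ≠ 0 := ofReal_ne_zero.mpr hc.ne'
  rw [neg_div]
  set w : ℂ := (Real.pi : ℂ) * Complex.I * (k : ℂ) / (c : ℂ) with hw
  have hwI : w = ((Real.pi * k / c : ℝ) : ℂ) * Complex.I := by rw [hw]; push_cast; ring
  have hwre : w.re = 0 := by rw [hwI]; simp
  -- the function `h` and its continuous-map version `H`
  have hcont : Continuous fun y : ℝ =>
      gumbelA (-(c : ℂ) * y) * Complex.exp (-2 * Real.pi * Complex.I * k * y) := by
    apply Continuous.mul
    · exact continuous_gumbelA.comp (by fun_prop)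
    · exact Complex.continuous_exp.comp (by fun_prop)
  set H : C(ℝ, ℂ) := ⟨_, hcont⟩ with hH
  -- pointwise norm bound
  have hbound : ∀ y : ℝ, ‖H y‖ ≤ 3 * Real.exp (-(2 * c) * |y|) := by
    intro y
    show ‖gumbelA (-(c : ℂ) * y) * Complex.exp (-2 * Real.pi * Complex.I * k * y)‖ ≤ _
    rw [norm_mul]
    have h1 : ‖Complex.exp (-2 * (Real.pi : ℂ) * Complex.I * k * y)‖ = 1 := by
      rw [show (-2 * (Real.pi : ℂ) * Complex.I * k * y) = ((-2 * Real.pi * k * y : ℝ) : ℂ) * Complex.I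
        by push_cast; ring]
      rw [Complex.norm_exp_ofReal_mul_I]
    rw [h1, mul_one, show (-(c : ℂ) * y) = ((-(c * y) : ℝ) : ℂ) by push_cast; ring]
    calc ‖gumbelA ((-(c * y) : ℝ) : ℂ)‖ ≤ 3 * Real.exp (-(2 * |(-(c * y) : ℝ)|)) :=
          norm_gumbelA_le _
      _ = 3 * Real.exp (-(2 * c) * |y|) := by
          rw [abs_neg, abs_mul, _root_.abs_of_pos hc]; ring_nf
  -- uniform bound on translates
  have hbnd2 : ∀ n : ℤ, ∀ x : ℝ, x ∈ Set.Icc (0:ℝ) 1 →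
      ‖H (x + (n:ℝ))‖ ≤ 3 * Real.exp (2 * c) * Real.exp (-(2 * c) * |(n : ℝ)|) := by
    intro n x hx
    obtain ⟨hx0, hx1⟩ := hx
    refine le_trans (hbound _) ?_
    rw [show 3 * Real.exp (2 * c) * Real.exp (-(2 * c) * |(n : ℝ)|)
        = 3 * Real.exp (2 * c + -(2 * c) * |(n : ℝ)|) by rw [mul_assoc, ← Real.exp_add]]
    have habs : |(n : ℝ)| ≤ |x + (n : ℝ)| + 1 := by
      have h2 : |(n : ℝ)| ≤ |x + (n : ℝ)| + |(-x : ℝ)| := by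
        simpa using abs_add_le (x + (n : ℝ)) (-x)
      have h3 : |(-x : ℝ)| ≤ 1 := by rw [abs_neg]; rw [_root_.abs_of_nonneg hx0]; exact hx1
      linarith
    have h4 : -(2 * c) * |x + (n : ℝ)| ≤ 2 * c + -(2 * c) * |(n : ℝ)| := by nlinarith
    exact mul_le_mul_of_nonneg_left (Real.exp_le_exp.mpr h4) (by norm_num)
  have hsummand : Summable (fun n : ℤ => 3 * Real.exp (2 * c) * Real.exp (-(2 * c) * |(n : ℝ)|)) :=
    (summable_exp_int (2 * c) (by linarith)).mul_left _
  have hsum : Summable fun n : ℤ =>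
      ‖(H.comp (ContinuousMap.addRight (n : ℝ))).restrict (Set.Icc (0:ℝ) 1)‖ := by
    apply Summable.of_nonneg_of_le (fun n => norm_nonneg _) (fun n => ?_) hsummand
    refine (ContinuousMap.norm_le _ (by positivity)).mpr ?_
    rintro ⟨x, hx⟩
    simpa using hbnd2 n x hx
  haveI : CompactSpace ↥(Set.uIcc (0:ℝ) 1) := isCompact_iff_compactSpace.mp isCompact_uIcc
  have hsumu : Summable fun n : ℤ =>
      ‖(H.comp (ContinuousMap.addRight (n : ℝ))).restrict (Set.uIcc (0:ℝ) 1)‖ := by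
    apply Summable.of_nonneg_of_le (fun n => norm_nonneg _) (fun n => ?_) hsummand
    refine (ContinuousMap.norm_le _ (by positivity)).mpr ?_
    rintro ⟨x, hx⟩
    have hx' : x ∈ Set.Icc (0:ℝ) 1 := by
      rwa [Set.uIcc_of_le (by norm_num : (0:ℝ) ≤ 1)] at hx
    simpa using hbnd2 n x hx'
  -- integrability
  have hint : MeasureTheory.Integrable (fun y : ℝ =>
      gumbelA (-(c : ℂ) * y) * Complex.exp (-2 * Real.pi * Complex.I * k * y)) :=
    Real.integrable_of_summable_norm_Icc (f := H) hsum
  -- periodization identity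
  have hper : ∀ x : ℝ, cyclingProfile c x * Complex.exp (-2 * Real.pi * Complex.I * k * x)
      = ∑' n : ℤ, (H.comp (ContinuousMap.addRight (n : ℝ))) x := by
    intro x
    calc cyclingProfile c x * Complex.exp (-2 * Real.pi * Complex.I * k * x)
        = ∑' n : ℤ, gumbelA (c * (n - x)) * Complex.exp (-2 * Real.pi * Complex.I * k * x) := by
          rw [cyclingProfile, tsum_mul_right]
      _ = ∑' n : ℤ, gumbelA (c * (-(n : ℂ) - x)) * Complex.exp (-2 * Real.pi * Complex.I * k * x) := by
          refine ((Equiv.neg ℤ).tsum_eq fun n : ℤ =>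
            gumbelA (c * (n - x)) * Complex.exp (-2 * Real.pi * Complex.I * k * x)).symm.trans ?_
          apply tsum_congr; intro n
          simp only [Equiv.neg_apply, Int.cast_neg]
      _ = ∑' n : ℤ, (H.comp (ContinuousMap.addRight (n : ℝ))) x := by
          apply tsum_congr
          intro n
          show gumbelA ((c:ℂ) * (-(n : ℂ) - x)) * Complex.exp (-2 * Real.pi * Complex.I * k * x)
            = gumbelA (-(c : ℂ) * ((x + (n:ℝ) : ℝ) : ℂ))
              * Complex.exp (-2 * Real.pi * Complex.I * k * ((x + (n:ℝ) : ℝ) : ℂ))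
          have e1 : (-(c:ℂ) * ((x + (n:ℝ) : ℝ) : ℂ)) = (c:ℂ) * (-(n:ℂ) - x) := by
            push_cast; ring
          have e2 : Complex.exp (-2 * Real.pi * Complex.I * k * ((x + (n:ℝ) : ℝ) : ℂ))
              = Complex.exp (-2 * Real.pi * Complex.I * k * x) := by
            rw [show (-2 * (Real.pi:ℂ) * Complex.I * k * ((x + (n:ℝ) : ℝ) : ℂ))
                = -2 * Real.pi * Complex.I * k * x + ((-(k*n) : ℤ) : ℂ) * (2 * Real.pi * Complex.I)
              by push_cast; ring, Complex.exp_add, Complex.exp_int_mul_two_pi_mul_I, mul_one]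
          rw [e1, e2]
  -- the big pointwise change-of-variables identity
  have hpt : ∀ y : ℝ, H y = |c * Real.exp (2*c*y)| •
      (((Real.exp (-(1/2 * Real.exp (2*c*y))) : ℝ) : ℂ)
        * ((1/2 * Real.exp (2*c*y) : ℝ) : ℂ) ^ (-w) * ((2:ℂ) ^ (-w) / (c:ℂ))) := by
    intro y
    have hp : (0:ℝ) < 1/2 * Real.exp (2*c*y) := by positivity
    have habs : |c * Real.exp (2*c*y)| = c * Real.exp (2*c*y) := _root_.abs_of_pos (by positivity)
    have hlog : Real.log (1/2 * Real.exp (2*c*y)) = 2*c*y - Real.log 2 := by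
      rw [Real.log_mul (by norm_num) (Real.exp_ne_zero _), Real.log_exp, one_div, Real.log_inv]
      ring
    have e2 : ((1/2 * Real.exp (2*c*y) : ℝ) : ℂ) ^ (-w)
        = Complex.exp (((2*c*y - Real.log 2 : ℝ) : ℂ) * (-w)) := by
      rw [Complex.cpow_def_of_ne_zero (Complex.ofReal_ne_zero.mpr hp.ne') (-w),
        ← Complex.ofReal_log hp.le, hlog]
    have e3 : (2:ℂ) ^ (-w) = Complex.exp (((Real.log 2 : ℝ) : ℂ) * (-w)) := by
      rw [show (2:ℂ) = ((2:ℝ):ℂ) by norm_num,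
        Complex.cpow_def_of_ne_zero (by norm_num) (-w), ← Complex.ofReal_log (by norm_num)]
    have e4 : Complex.exp (((2*c*y - Real.log 2 : ℝ) : ℂ) * (-w))
          * Complex.exp (((Real.log 2 : ℝ) : ℂ) * (-w))
        = Complex.exp (-2 * Real.pi * Complex.I * k * y) := by
      rw [← Complex.exp_add]
      congr 1
      rw [hw]
      push_cast
      field_simp
      ring
    have e5 : gumbelA (-(c:ℂ) * y)
        = Complex.exp (((2*c*y : ℝ) : ℂ) + -(((1/2 * Real.exp (2*c*y) : ℝ)) : ℂ)) := by
      unfold gumbelA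
      congr 1
      rw [show (-2 : ℂ) * (-(c:ℂ) * y) = ((2*c*y : ℝ) : ℂ) by push_cast; ring]
      push_cast
      ring
    show gumbelA (-(c : ℂ) * y) * Complex.exp (-2 * Real.pi * Complex.I * k * y) = _
    rw [habs, Complex.real_smul, e2, e3, e5, Complex.exp_add, ← e4]
    push_cast
    have hcc : (c:ℂ) / c = 1 := div_self hc0
    field_simp
  -- change of variables
  have hderiv : ∀ y ∈ Set.univ, HasDerivWithinAt (fun y : ℝ => 1/2 * Real.exp (2*c*y))
      (c * Real.exp (2*c*y)) Set.univ y := by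
    intro y _
    have h1 : HasDerivAt (fun y : ℝ => 2*c*y) (2*c) y := by
      simpa using (hasDerivAt_id y).const_mul (2*c)
    have h2 := (h1.exp).const_mul (1/2 : ℝ)
    have h3 : HasDerivAt (fun y : ℝ => 1/2 * Real.exp (2*c*y)) (c * Real.exp (2*c*y)) y := by
      exact h2.congr_deriv (by ring)
    exact h3.hasDerivWithinAt
  have hinj : Set.InjOn (fun y : ℝ => 1/2 * Real.exp (2*c*y)) Set.univ := by
    intro a _ b _ hab
    simp only at hab
    have h2 : Real.exp (2*c*a) = Real.exp (2*c*b) := by linarith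
    have h3 := Real.exp_injective h2
    have h2c : (2*c) ≠ 0 := by positivity
    exact mul_left_cancel₀ h2c h3
  have himg : (fun y : ℝ => 1/2 * Real.exp (2*c*y)) '' Set.univ = Set.Ioi (0:ℝ) := by
    rw [Set.image_univ]
    ext v
    simp only [Set.mem_range, Set.mem_Ioi]
    constructor
    · rintro ⟨y, rfl⟩; positivity
    · intro hv
      refine ⟨Real.log (2*v) / (2*c), ?_⟩
      rw [show 2*c*(Real.log (2*v)/(2*c)) = Real.log (2*v) by field_simp,
        Real.exp_log (by linarith)]
      ring
  have hcov : (∫ y : ℝ, H y) = ∫ v in Set.Ioi (0:ℝ),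
      (((Real.exp (-v) : ℝ) : ℂ) * ((v : ℝ) : ℂ) ^ (-w) * ((2:ℂ) ^ (-w) / (c:ℂ))) := by
    calc (∫ y : ℝ, H y)
        = ∫ y : ℝ, |c * Real.exp (2*c*y)| •
            (((Real.exp (-(1/2 * Real.exp (2*c*y))) : ℝ) : ℂ)
              * ((1/2 * Real.exp (2*c*y) : ℝ) : ℂ) ^ (-w) * ((2:ℂ) ^ (-w) / (c:ℂ))) := by
          congr 1; funext y; exact hpt y
      _ = ∫ y in Set.univ, |c * Real.exp (2*c*y)| •
            (((Real.exp (-(1/2 * Real.exp (2*c*y))) : ℝ) : ℂ)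
              * ((1/2 * Real.exp (2*c*y) : ℝ) : ℂ) ^ (-w) * ((2:ℂ) ^ (-w) / (c:ℂ))) :=
          MeasureTheory.setIntegral_univ.symm
      _ = ∫ v in (fun y : ℝ => 1/2 * Real.exp (2*c*y)) '' Set.univ,
            (((Real.exp (-v) : ℝ) : ℂ) * ((v : ℝ) : ℂ) ^ (-w) * ((2:ℂ) ^ (-w) / (c:ℂ))) :=
          (MeasureTheory.integral_image_eq_integral_abs_deriv_smul MeasurableSet.univ
            hderiv hinj (fun v : ℝ => ((Real.exp (-v) : ℝ) : ℂ) * ((v : ℝ) : ℂ) ^ (-w)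
              * ((2:ℂ) ^ (-w) / (c:ℂ)))).symm
      _ = ∫ v in Set.Ioi (0:ℝ),
            (((Real.exp (-v) : ℝ) : ℂ) * ((v : ℝ) : ℂ) ^ (-w) * ((2:ℂ) ^ (-w) / (c:ℂ))) := by
          rw [himg]
  -- the Gamma integral
  have hgamma : (∫ v in Set.Ioi (0:ℝ),
        (((Real.exp (-v) : ℝ) : ℂ) * ((v : ℝ) : ℂ) ^ (-w) * ((2:ℂ) ^ (-w) / (c:ℂ))))
      = (2:ℂ) ^ (-w) / (c:ℂ) * Complex.Gamma (1 - w) := by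
    rw [Complex.Gamma_eq_integral (by rw [Complex.sub_re, Complex.one_re, hwre]; norm_num),
      Complex.GammaIntegral, mul_comm, ← MeasureTheory.integral_mul_const]
    apply MeasureTheory.setIntegral_congr_fun measurableSet_Ioi
    intro v _
    rw [show (1:ℂ) - w - 1 = -w by ring]
  -- main computation
  calc ∫ x in (0:ℝ)..1, cyclingProfile c x * Complex.exp (-2 * Real.pi * Complex.I * k * x)
      = ∫ x in (0:ℝ)..1, ∑' n : ℤ, (H.comp (ContinuousMap.addRight (n : ℝ))) x := by
        apply intervalIntegral.integral_congr
        intro x _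
        exact hper x
    _ = ∑' n : ℤ, ∫ x in (0:ℝ)..1, (H.comp (ContinuousMap.addRight (n : ℝ))) x := by
        refine (intervalIntegral.tsum_intervalIntegral_eq_of_summable_norm ?_).symm
        exact hsumu
    _ = ∫ x : ℝ, H x := by
        exact hint.hasSum_intervalIntegral_comp_add_int.tsum_eq
    _ = (2:ℂ) ^ (-w) / (c:ℂ) * Complex.Gamma (1 - w) := by rw [hcov, hgamma]
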